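/- There exists a function f : ℝ → ℝ that is continuous on all of ℝ but differentiable at no point. -/

import Mathlib

noncomputable def gg (y : ℝ) : ℝ := |y - round y|

lemma gg_nonneg (y : ℝ) : 0 ≤ gg y := abs_nonneg _

lemma gg_le (y : ℝ) : gg y ≤ 1/2 := abs_sub_round y

lemma gg_nearest (y : ℝ) (m : ℤ) : gg y ≤ |y - m| := by
  rcases eq_or_ne m (round y) with h | h
  · simp [gg, h]
  · have h1 : (1:ℝ) ≤ |(round y : ℝ) - m| := by
      have : round y - m ≠ 0 := sub_ne_zero.2 (by exact_mod_cast Ne.symm h)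
      exact_mod_cast Int.one_le_abs (by exact_mod_cast this)
    have h2 := abs_sub_round y
    have h3 : |(round y : ℝ) - m| ≤ |y - round y| + |y - m| := by
      calc |(round y : ℝ) - m| = |(y - m) - (y - round y)| := by ring_nf
        _ ≤ |y - m| + |y - round y| := abs_sub _ _
        _ = |y - round y| + |y - m| := by ring
    unfold gg; linarith

lemma gg_lip (a b : ℝ) : |gg a - gg b| ≤ |a - b| := by
  rw [abs_sub_le_iff]
  constructor
  · have := gg_nearest a (round b)
    have h2 : |a - round b| ≤ |a - b| + |b - round b| := by
      calc |a - (round b:ℝ)| = |(a - b) + (b - round b)| := by ring_nf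
        _ ≤ |a - b| + |b - round b| := abs_add_le _ _
    unfold gg at *; linarith
  · have := gg_nearest b (round a)
    have h2 : |b - round a| ≤ |b - a| + |a - round a| := by
      calc |b - (round a:ℝ)| = |(b - a) + (a - round a)| := by ring_nf
        _ ≤ |b - a| + |a - round a| := abs_add_le _ _
    rw [abs_sub_comm a b]
    unfold gg at *; linarith

lemma gg_int_add (y : ℝ) (m : ℤ) : gg (y + m) = gg y := by
  unfold gg; rw [round_add_intCast]; push_cast; ring_nf

lemma gg_left (y : ℝ) (j : ℤ) (h1 : (j:ℝ) ≤ y) (h2 : y ≤ j + 1/2) : gg y = y - j := by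
  rcases lt_or_eq_of_le h2 with h2' | h2'
  · have : round y = j := by
      rw [round_eq]
      rw [Int.floor_eq_iff]
      constructor <;> [linarith; linarith]
    rw [gg, this, abs_of_nonneg (by linarith)]
  · have : round y = j + 1 := by
      rw [round_eq, h2']
      rw [show (j:ℝ) + 1/2 + 1/2 = ((j+1 : ℤ):ℝ) by push_cast; ring, Int.floor_intCast]
    rw [gg, this, h2']; push_cast
    rw [abs_of_nonpos (by linarith)]; ring

lemma gg_right (y : ℝ) (j : ℤ) (h1 : (j:ℝ) + 1/2 ≤ y) (h2 : y ≤ j + 1) : gg y = j + 1 - y := by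
  have : round y = j + 1 := by
    rw [round_eq, Int.floor_eq_iff]
    push_cast
    constructor <;> linarith
  rw [gg, this]; push_cast
  rw [abs_of_nonpos (by linarith)]; ring

lemma gg_affine {a b : ℝ} {m : ℤ} (ha1 : (m:ℝ)/2 ≤ a) (ha2 : a ≤ (m+1)/2)
    (hb1 : (m:ℝ)/2 ≤ b) (hb2 : b ≤ (m+1)/2) :
    gg b - gg a = b - a ∨ gg b - gg a = -(b - a) := by
  rcases Int.even_or_odd m with ⟨j, hj⟩ | ⟨j, hj⟩
  · left
    subst hj
    rw [gg_left a j (by push_cast at ha1 ⊢; linarith) (by push_cast at ha2 ⊢; linarith),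
        gg_left b j (by push_cast at hb1 ⊢; linarith) (by push_cast at hb2 ⊢; linarith)]
    ring
  · right
    subst hj
    rw [gg_right a j (by push_cast at ha1 ⊢; linarith) (by push_cast at ha2 ⊢; linarith),
        gg_right b j (by push_cast at hb1 ⊢; linarith) (by push_cast at hb2 ⊢; linarith)]
    ring


noncomputable def ff (x : ℝ) : ℝ := ∑' k : ℕ, gg ((4:ℝ)^k * x) / 4^k

lemma bound_aux (y : ℝ) (k : ℕ) : gg y / (4:ℝ)^k ≤ (1/2) * (1/4)^k := by
  rw [show ((1:ℝ)/2) * (1/4)^k = (1/2) / 4^k by rw [one_div_pow]; ring]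
  exact div_le_div_of_nonneg_right (gg_le y) (by positivity) |>.trans_eq rfl

lemma summable_aux : Summable (fun k : ℕ => (1/2:ℝ) * (1/4)^k) :=
  Summable.mul_left _ (summable_geometric_of_lt_one (by norm_num) (by norm_num))

lemma summable_ff (x : ℝ) : Summable (fun k : ℕ => gg ((4:ℝ)^k * x) / 4^k) :=
  Summable.of_nonneg_of_le (fun k => div_nonneg (gg_nonneg _) (by positivity))
    (fun k => bound_aux _ k) summable_aux

lemma gg_cont : Continuous gg := by
  have : LipschitzWith 1 gg := by
    apply LipschitzWith.of_dist_le_mul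
    intro a b
    rw [Real.dist_eq, Real.dist_eq, NNReal.coe_one, one_mul]
    exact gg_lip a b
  exact this.continuous

lemma ff_cont : Continuous ff := by
  apply continuous_tsum (u := fun k : ℕ => (1/2) * (1/4:ℝ)^k)
  · intro k
    exact (gg_cont.comp (continuous_const.mul continuous_id)).div_const _
  · exact summable_aux
  · intro k x
    rw [Real.norm_eq_abs, abs_of_nonneg (div_nonneg (gg_nonneg _) (by positivity))]
    exact bound_aux _ k


lemma main_step (x : ℝ) (n : ℕ) : ∃ h : ℝ, h ≠ 0 ∧ |h| ≤ (1/4:ℝ)^n ∧ ∃ Z : ℤ,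
    ff (x+h) - ff x = h * Z ∧ Z % 2 = ((n:ℤ)+1) % 2 := by
  set δ : ℝ := 1 / (2 * 4^n) with hδdef
  have hδ : 0 < δ := by positivity
  set m : ℤ := ⌊x / δ⌋ with hmdef
  have hm1 : (m:ℝ) * δ ≤ x := by
    have := Int.floor_le (x / δ)
    calc (m:ℝ) * δ ≤ (x/δ) * δ := by nlinarith
      _ = x := by field_simp
  have hm2 : x < (m:ℝ) * δ + δ := by
    have h1 := Int.lt_floor_add_one (x / δ)
    have h2 : x / δ * δ < ((m:ℝ) + 1) * δ := by nlinarith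
    have hx : x / δ * δ = x := by field_simp
    nlinarith
  set h : ℝ := if x ≤ m * δ + δ/2 then δ/2 else -(δ/2) with hhdef
  have hh0 : h ≠ 0 := by
    rw [hhdef]; split
    · positivity
    · simp only [ne_eq, neg_eq_zero]; positivity
  have habs : |h| = δ/2 := by
    rw [hhdef]; split
    · exact abs_of_pos (by positivity)
    · rw [abs_neg]; exact abs_of_pos (by positivity)
  have hle : |h| ≤ (1/4:ℝ)^n := by
    rw [habs, hδdef, one_div_pow, div_div]
    apply one_div_le_one_div_of_le (by positivity)
    nlinarith [pow_pos (show (0:ℝ) < 4 by norm_num) n]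
  have hiv : (m:ℝ)*δ ≤ x + h ∧ x + h ≤ m*δ + δ := by
    rw [hhdef]; split
    · constructor <;> linarith
    · rename_i hcase; push_neg at hcase; constructor <;> linarith
  have hiv2 : (m:ℝ)*δ ≤ x ∧ x ≤ m*δ + δ := ⟨hm1, by linarith⟩
  have key : ∀ k : ℕ, ∃ z : ℤ, (z = 1 ∨ z = -1) ∧ (k ≤ n →
      gg ((4:ℝ)^k*(x+h))/4^k - gg ((4:ℝ)^k*x)/4^k = h * z) := by
    intro k
    by_cases hk : k ≤ n
    swap
    · exact ⟨1, Or.inl rfl, fun hc => absurd hc hk⟩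
    set N : ℤ := 4^(n-k) with hNdef
    have hN : 0 < N := by positivity
    set m' : ℤ := m / N with hm'def
    have hdm := Int.mul_ediv_add_emod m N
    have hr1 : 0 ≤ m % N := Int.emod_nonneg m (by omega)
    have hr2 : m % N < N := Int.emod_lt_of_pos m hN
    have key1 : m' * N ≤ m := by
      have e : m' * N = N * (m / N) := by rw [hm'def]; ring
      omega
    have key2 : m + 1 ≤ (m' + 1) * N := by
      have e : (m' + 1) * N = N * (m / N) + N := by rw [hm'def]; ring
      omega
    have hNr : ((N:ℝ)) = 4^(n-k) := by rw [hNdef]; push_cast; norm_num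
    have hpow : (4:ℝ)^k * 4^(n-k) = 4^n := by
      rw [← pow_add]; congr 1; omega
    have hNpos : (0:ℝ) < N := by exact_mod_cast hN
    have hscale : (4:ℝ)^k * δ = 1 / (2 * N) := by
      rw [hδdef, hNr]
      field_simp
      linarith [hpow]
    have hc1 : ((m':ℝ)) * N ≤ m := by exact_mod_cast key1
    have hc2 : ((m:ℝ) + 1) ≤ ((m':ℝ)+1) * N := by exact_mod_cast key2
    have hend1 : (m':ℝ)/2 ≤ (4:ℝ)^k * ((m:ℝ) * δ) := by
      have e : (4:ℝ)^k * ((m:ℝ) * δ) = (m:ℝ) * (4^k * δ) := by ring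
      rw [e, hscale, mul_one_div]
      calc (m':ℝ)/2 = ((m':ℝ) * N)/(2*N) := by field_simp
        _ ≤ (m:ℝ)/(2*N) := div_le_div_of_nonneg_right hc1 (by positivity) |>.trans_eq rfl
    have hend2 : (4:ℝ)^k * ((m:ℝ) * δ) + 4^k * δ ≤ ((m':ℝ)+1)/2 := by
      have e : (4:ℝ)^k * ((m:ℝ) * δ) + 4^k * δ = ((m:ℝ) + 1) * (4^k * δ) := by ring
      rw [e, hscale, mul_one_div]
      calc ((m:ℝ)+1)/(2*N) ≤ (((m':ℝ)+1) * N)/(2*N) :=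
            div_le_div_of_nonneg_right hc2 (by positivity)
        _ = ((m':ℝ)+1)/2 := by field_simp
    have h4k : (0:ℝ) < 4^k := by positivity
    have hmono : ∀ {u v : ℝ}, u ≤ v → (4:ℝ)^k * u ≤ 4^k * v :=
      fun huv => mul_le_mul_of_nonneg_left huv h4k.le
    have ha1 : (m':ℝ)/2 ≤ (4:ℝ)^k * x := hend1.trans (hmono hiv2.1)
    have ha2 : (4:ℝ)^k * x ≤ ((m':ℝ)+1)/2 := by
      have h1 := hmono hiv2.2
      have h2 : (4:ℝ)^k * ((m:ℝ)*δ+δ) = 4^k*((m:ℝ)*δ) + 4^k*δ := by ring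
      linarith [hend2]
    have hb1 : (m':ℝ)/2 ≤ (4:ℝ)^k * (x+h) := hend1.trans (hmono hiv.1)
    have hb2 : (4:ℝ)^k * (x+h) ≤ ((m':ℝ)+1)/2 := by
      have h1 := hmono hiv.2
      have h2 : (4:ℝ)^k * ((m:ℝ)*δ+δ) = 4^k*((m:ℝ)*δ) + 4^k*δ := by ring
      linarith [hend2]
    have hdiff : (4:ℝ)^k*(x+h) - 4^k*x = 4^k * h := by ring
    rcases gg_affine (m := m') ha1 ha2 hb1 hb2 with hc | hc
    · refine ⟨1, Or.inl rfl, fun _ => ?_⟩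
      rw [div_sub_div_same, hc, hdiff, Int.cast_one, mul_one, mul_comm,
        mul_div_assoc, div_self (ne_of_gt h4k), mul_one]
    · refine ⟨-1, Or.inr rfl, fun _ => ?_⟩
      rw [div_sub_div_same, hc, hdiff]
      push_cast
      field_simp
  choose z hz1 hz2 using key
  have tail : ∀ k : ℕ, n < k → gg ((4:ℝ)^k*(x+h)) = gg ((4:ℝ)^k*x) := by
    intro k hk
    have hex : ∃ c : ℤ, (4:ℝ)^k * h = c := by
      have hp : (4:ℝ)^k * (δ/2) = ((4^(k-n-1) : ℤ) : ℝ) := by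
        rw [show ((4^(k-n-1):ℤ):ℝ) = (4:ℝ)^(k-n-1) by push_cast; ring, hδdef,
          show (4:ℝ)^k = 4^(k-n-1)*4^(n+1) by rw [← pow_add]; congr 1; omega]
        field_simp
        ring
      rw [hhdef]; split
      · exact ⟨4^(k-n-1), hp⟩
      · exact ⟨-4^(k-n-1), by rw [Int.cast_neg, ← hp]; ring⟩
    obtain ⟨c, hc⟩ := hex
    rw [show (4:ℝ)^k*(x+h) = 4^k*x + 4^k*h by ring, hc, gg_int_add]
  have hsub : ff (x+h) - ff x = ∑' k : ℕ, (gg ((4:ℝ)^k*(x+h))/4^k - gg ((4:ℝ)^k*x)/4^k) :=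
    (Summable.tsum_sub (summable_ff (x+h)) (summable_ff x)).symm
  have hfin : (∑' k : ℕ, (gg ((4:ℝ)^k*(x+h))/4^k - gg ((4:ℝ)^k*x)/4^k))
      = ∑ k ∈ Finset.range (n+1), (gg ((4:ℝ)^k*(x+h))/4^k - gg ((4:ℝ)^k*x)/4^k) := by
    apply tsum_eq_sum
    intro k hk
    rw [Finset.mem_range] at hk
    rw [tail k (by omega)]
    ring
  refine ⟨h, hh0, hle, ∑ k ∈ Finset.range (n+1), z k, ?_, ?_⟩
  · rw [hsub, hfin]
    push_cast
    rw [Finset.mul_sum]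
    apply Finset.sum_congr rfl
    intro k hk
    rw [Finset.mem_range] at hk
    exact hz2 k (by omega)
  · rw [Finset.sum_int_mod]
    have hone : ∀ k ∈ Finset.range (n+1), z k % 2 = 1 := by
      intro k _
      rcases hz1 k with h | h <;> simp [h]
    rw [Finset.sum_congr rfl hone]
    simp


theorem exists_continuous_nowhere_differentiable :
    ∃ f : ℝ → ℝ, Continuous f ∧ ∀ x : ℝ, ¬ DifferentiableAt ℝ f x := by
  refine ⟨ff, ff_cont, fun x hdiff => ?_⟩
  have hderiv := hdiff.hasDerivAt
  rw [hasDerivAt_iff_tendsto_slope] at hderiv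
  choose h hh0 hle Z hZ hpar using fun n => main_step x n
  -- x + h n tends to x within {x}ᶜ
  have htend0 : Filter.Tendsto h Filter.atTop (nhds 0) := by
    apply squeeze_zero_norm (fun n => hle n)
    exact tendsto_pow_atTop_nhds_zero_of_lt_one (by norm_num) (by norm_num)
  have htend : Filter.Tendsto (fun n => x + h n) Filter.atTop (nhdsWithin x {x}ᶜ) := by
    apply tendsto_nhdsWithin_of_tendsto_nhds_of_eventually_within
    · have := Filter.Tendsto.const_add x htend0
      simpa using this
    · filter_upwards with n
      simp only [Set.mem_compl_iff, Set.mem_singleton_iff]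
      intro hc
      exact hh0 n (by linarith [hc])
  have hslope := hderiv.comp htend
  have heq : ∀ n, slope ff x (x + h n) = (Z n : ℝ) := by
    intro n
    rw [slope_def_field]
    have : (x + h n - x) = h n := by ring
    rw [div_eq_iff (by rw [this]; exact hh0 n)]
    rw [this, hZ n]
    ring
  have hZtend : Filter.Tendsto (fun n => (Z n : ℝ)) Filter.atTop (nhds (deriv ff x)) := by
    apply hslope.congr
    intro n
    exact heq n
  have hcauchy := hZtend.cauchySeq
  rw [Metric.cauchySeq_iff] at hcauchy
  obtain ⟨N, hN⟩ := hcauchy 1 (by norm_num)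
  have h1 := hN (N+1) (by omega) N (by omega)
  rw [Real.dist_eq] at h1
  have h2 : Z (N+1) = Z N := by
    have : |Z (N+1) - Z N| < 1 := by exact_mod_cast (by push_cast; exact h1 : |((Z (N+1) - Z N : ℤ) : ℝ)| < 1)
    have h3 := Int.abs_lt_one_iff.mp this
    omega
  have p1 := hpar (N+1)
  have p2 := hpar N
  rw [h2] at p1
  push_cast at p1 p2
  omega
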